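/- Suppose (P*, λ*, μ*) is a KKT triple for the ED problem and P*_i > 0 for at least two distinct indices i. Then every bid profile b* ∈ ℝ^n satisfying λ* ≤ b*_i ≤ C_i'(P*_i) for all i is an efficient Nash equilibrium of the inelastic electricity market game. -/
import Mathlib


open Finset

noncomputable section

/-- Feasible production profiles for the dispatch problems:
power balance `1ᵀP = 1ᵀP_d` and componentwise nonnegativity. -/
def Feasible {n : ℕ} (Pd P : Fin n → ℝ) : Prop :=
  (∑ i, P i = ∑ i, Pd i) ∧ ∀ i, 0 ≤ P i

/-- `P` is an optimizer of the ISO problem for bids `b`: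
it minimizes `bᵀP` over the feasible set. -/
def IsISOOpt {n : ℕ} (Pd b P : Fin n → ℝ) : Prop :=
  Feasible Pd P ∧ ∀ Q, Feasible Pd Q → ∑ i, b i * P i ≤ ∑ i, b i * Q i

/-- `P` is a minimizer of the economic dispatch (ED) problem. -/
def IsEDOpt {n : ℕ} (C : Fin n → ℝ → ℝ) (Pd P : Fin n → ℝ) : Prop :=
  Feasible Pd P ∧ ∀ Q, Feasible Pd Q → ∑ i, C i (P i) ≤ ∑ i, C i (Q i)

/-- `(P, lam, mu)` is a KKT triple for the ED problem, with `C' i` the marginal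
cost of generator `i`. -/
def IsKKT {n : ℕ} (C' : Fin n → ℝ → ℝ) (Pd P : Fin n → ℝ) (lam : ℝ)
    (mu : Fin n → ℝ) : Prop :=
  (∀ i, C' i (P i) = lam + mu i) ∧ (∑ i, P i = ∑ i, Pd i) ∧
    (∀ i, 0 ≤ P i) ∧ (∀ i, 0 ≤ mu i) ∧ (∑ i, P i * mu i = 0)

/-- Payoff of a generator with cost `Ci` bidding `bi` and producing `Pi`. -/
def Payoff (Ci : ℝ → ℝ) (bi Pi : ℝ) : ℝ := Pi * bi - Ci Pi

/-- `bstar` is a Nash equilibrium of the inelastic electricity market game. -/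
def IsNash {n : ℕ} (C : Fin n → ℝ → ℝ) (Pd bstar : Fin n → ℝ) : Prop :=
  (∀ i, 0 ≤ bstar i) ∧
  ∃ P0, IsISOOpt Pd bstar P0 ∧
    ∀ i (bi : ℝ), 0 ≤ bi → bi ≠ bstar i →
      ∀ P, IsISOOpt Pd (Function.update bstar i bi) P →
        Payoff (C i) bi (P i) ≤ Payoff (C i) (bstar i) (P0 i)

/-- `bstar` is an efficient bid: the optimizer of the ED problem is also an
optimizer of the ISO problem for bids `bstar`, and each `Pstar i` maximizes
the profit `P ↦ P * bstar i - C i P` over `P ≥ 0`. -/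
def IsEfficientBid {n : ℕ} (C : Fin n → ℝ → ℝ) (Pd bstar : Fin n → ℝ) : Prop :=
  (∀ i, 0 ≤ bstar i) ∧
  ∀ Pstar, IsEDOpt C Pd Pstar →
    IsISOOpt Pd bstar Pstar ∧
      ∀ i, ∀ P, 0 ≤ P → Payoff (C i) (bstar i) P ≤ Payoff (C i) (bstar i) (Pstar i)

/-- Standing assumptions on a generator cost function: continuously
differentiable with derivative `Cf'`, strongly convex on `[0, ∞)`, and
nonnegative marginal cost at zero. -/
def CostAssumptions (Cf Cf' : ℝ → ℝ) : Prop :=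
  (∀ x, HasDerivAt Cf (Cf' x) x) ∧ Continuous Cf' ∧
    (∃ m : ℝ, 0 < m ∧
      ∀ x y, 0 ≤ x → 0 ≤ y → (Cf' x - Cf' y) * (x - y) ≥ m * (x - y) ^ 2) ∧
    0 ≤ Cf' 0

/-- `P` is the unique maximizer of the profit `Q ↦ β * Q - Cf Q` over `Q ≥ 0`. -/
def IsUniqueArgmaxProfit (Cf : ℝ → ℝ) (β P : ℝ) : Prop :=
  0 ≤ P ∧ (∀ Q, 0 ≤ Q → β * Q - Cf Q ≤ β * P - Cf P) ∧
    ∀ Q, 0 ≤ Q → (∀ R, 0 ≤ R → β * R - Cf R ≤ β * Q - Cf Q) → Q = P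

/-- Strict gradient inequality for a strongly convex cost function. -/
lemma cost_strict_grad {Cf Cf' : ℝ → ℝ} (h : CostAssumptions Cf Cf')
    {x y : ℝ} (hx : 0 ≤ x) (hy : 0 ≤ y) (hxy : x ≠ y) :
    Cf x + Cf' x * (y - x) < Cf y := by
  obtain ⟨hd, _, ⟨m, hm, hsc⟩, _⟩ := h
  have mono : ∀ a b : ℝ, 0 ≤ a → a < b → Cf' a < Cf' b := by
    intro a b ha hab
    have hs := hsc b a (le_trans ha hab.le) ha
    have hba : 0 < b - a := by linarith
    have h2 : 0 < (Cf' b - Cf' a) * (b - a) :=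
      lt_of_lt_of_le (by positivity) hs
    nlinarith [h2, hba]
  rcases lt_or_gt_of_ne hxy with hlt | hlt
  · obtain ⟨c, hcmem, hc2⟩ := exists_hasDerivAt_eq_slope Cf Cf' hlt
      (fun t _ => (hd t).continuousAt.continuousWithinAt)
      (fun t _ => hd t)
    rw [eq_div_iff (by linarith [hcmem.1, hcmem.2] : y - x ≠ 0)] at hc2
    have h1 : Cf' x < Cf' c := mono x c hx hcmem.1
    nlinarith [hcmem.1, hcmem.2]
  · obtain ⟨c, hcmem, hc2⟩ := exists_hasDerivAt_eq_slope Cf Cf' hlt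
      (fun t _ => (hd t).continuousAt.continuousWithinAt)
      (fun t _ => hd t)
    rw [eq_div_iff (by linarith [hcmem.1, hcmem.2] : x - y ≠ 0)] at hc2
    have h1 : Cf' c < Cf' x := mono c x (le_trans hy hcmem.1.le) hcmem.2
    nlinarith [hcmem.1, hcmem.2]

/-- Gradient inequality for a strongly convex cost function. -/
lemma cost_grad {Cf Cf' : ℝ → ℝ} (h : CostAssumptions Cf Cf')
    {x y : ℝ} (hx : 0 ≤ x) (hy : 0 ≤ y) :
    Cf x + Cf' x * (y - x) ≤ Cf y := by
  by_cases hxy : x = y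
  · subst hxy; simp
  · exact (cost_strict_grad h hx hy hxy).le

/-- If `(Pstar, lam, mu)` is a KKT triple for the ED problem and
`Pstar i > 0` for at least two distinct indices, then every bid profile `bstar`
with `lam ≤ bstar i ≤ C' i (Pstar i)` for all `i` is an efficient Nash
equilibrium of the inelastic electricity market game. -/
theorem efficient_nash_characterization {n : ℕ} (hn : 2 ≤ n)
    (C C' : Fin n → ℝ → ℝ) (hC : ∀ i, CostAssumptions (C i) (C' i))
    (Pd : Fin n → ℝ) (hPd : ∀ i, 0 ≤ Pd i) (hPdpos : 0 < ∑ i, Pd i)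
    (Pstar : Fin n → ℝ) (lam : ℝ) (mu : Fin n → ℝ)
    (hKKT : IsKKT C' Pd Pstar lam mu)
    (htwo : ∃ i j, i ≠ j ∧ 0 < Pstar i ∧ 0 < Pstar j)
    (bstar : Fin n → ℝ)
    (hb : ∀ i, lam ≤ bstar i ∧ bstar i ≤ C' i (Pstar i)) :
    IsEfficientBid C Pd bstar ∧ IsNash C Pd bstar := by
  obtain ⟨hgrad, hbal, hPnn, hmunn, hcomp⟩ := hKKT
  -- each complementarity term is zero
  have hcompi : ∀ i, Pstar i * mu i = 0 := by
    intro i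
    exact (Finset.sum_eq_zero_iff_of_nonneg
      (fun j _ => mul_nonneg (hPnn j) (hmunn j))).mp hcomp i (mem_univ i)
  have hposlam : ∀ i, 0 < Pstar i → C' i (Pstar i) = lam := by
    intro i hi
    have hmu0 : mu i = 0 := by
      rcases mul_eq_zero.mp (hcompi i) with h | h
      · linarith
      · exact h
    rw [hgrad i, hmu0, add_zero]
  have hbeq : ∀ i, 0 < Pstar i → bstar i = lam := by
    intro i hi
    have h2 := (hb i).2
    rw [hposlam i hi] at h2
    exact le_antisymm h2 (hb i).1
  obtain ⟨i0, j0, hij, hi0, hj0⟩ := htwo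
  have hlampos : 0 < lam := by
    obtain ⟨_, _, ⟨m, hm, hsc⟩, h0⟩ := hC i0
    have hsc' := hsc (Pstar i0) 0 hi0.le le_rfl
    have h2 : 0 < (C' i0 (Pstar i0) - C' i0 0) * (Pstar i0 - 0) :=
      lt_of_lt_of_le (by nlinarith [mul_pos hm (mul_pos hi0 hi0)]) hsc'
    have h1 : C' i0 0 < C' i0 (Pstar i0) := by nlinarith [h2, hi0]
    rw [hposlam i0 hi0] at h1
    linarith
  have hbnn : ∀ i, 0 ≤ bstar i := fun i => le_trans hlampos.le (hb i).1
  have hfeas : Feasible Pd Pstar := ⟨hbal, hPnn⟩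
  -- the KKT linear term is nonnegative on the feasible set
  have hlin : ∀ Q, Feasible Pd Q → 0 ≤ ∑ i, C' i (Pstar i) * (Q i - Pstar i) := by
    intro Q hQ
    have e1 : ∑ i, C' i (Pstar i) * (Q i - Pstar i)
        = lam * (∑ i, Q i) - lam * (∑ i, Pstar i)
          + ((∑ i, mu i * Q i) - ∑ i, Pstar i * mu i) := by
      rw [Finset.mul_sum, Finset.mul_sum, ← Finset.sum_sub_distrib,
        ← Finset.sum_sub_distrib, ← Finset.sum_add_distrib]
      apply Finset.sum_congr rfl
      intro i _
      rw [hgrad i]; ring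
    have e2 : 0 ≤ ∑ i, mu i * Q i :=
      Finset.sum_nonneg fun i _ => mul_nonneg (hmunn i) (hQ.2 i)
    rw [e1, hQ.1, hbal, hcomp]
    linarith
  -- Pstar is ED optimal
  have hED : IsEDOpt C Pd Pstar := by
    refine ⟨hfeas, fun Q hQ => ?_⟩
    have h1 : ∑ i, (C i (Pstar i) + C' i (Pstar i) * (Q i - Pstar i)) ≤ ∑ i, C i (Q i) :=
      Finset.sum_le_sum fun i _ => cost_grad (hC i) (hPnn i) (hQ.2 i)
    rw [Finset.sum_add_distrib] at h1
    have h2 := hlin Q hQ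
    linarith
  -- ED optimizer is unique
  have hEDuniq : ∀ P', IsEDOpt C Pd P' → P' = Pstar := by
    intro P' hP'
    by_contra hne
    obtain ⟨k, hk⟩ : ∃ k, P' k ≠ Pstar k := by
      by_contra h; push_neg at h; exact hne (funext h)
    have h1 : ∑ i, (C i (Pstar i) + C' i (Pstar i) * (P' i - Pstar i)) < ∑ i, C i (P' i) :=
      Finset.sum_lt_sum (fun i _ => cost_grad (hC i) (hPnn i) (hP'.1.2 i))
        ⟨k, mem_univ k, cost_strict_grad (hC k) (hPnn k) (hP'.1.2 k) (Ne.symm hk)⟩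
    rw [Finset.sum_add_distrib] at h1
    have h2 := hlin P' hP'.1
    have h3 := hP'.2 Pstar hfeas
    linarith
  -- Pstar is ISO optimal for bids bstar
  have hISO : IsISOOpt Pd bstar Pstar := by
    refine ⟨hfeas, fun Q hQ => ?_⟩
    have e1 : ∑ i, bstar i * Pstar i = lam * ∑ i, Pd i := by
      rw [← hbal, Finset.mul_sum]
      apply Finset.sum_congr rfl
      intro i _
      rcases (hPnn i).eq_or_lt with h | h
      · rw [← h]; ring
      · rw [hbeq i h]
    have e2 : lam * ∑ i, Pd i ≤ ∑ i, bstar i * Q i := by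
      rw [← hQ.1, Finset.mul_sum]
      exact Finset.sum_le_sum fun i _ =>
        mul_le_mul_of_nonneg_right ((hb i).1) (hQ.2 i)
    linarith
  -- each Pstar i maximizes profit at bid bstar i
  have hProfit : ∀ i P, 0 ≤ P →
      Payoff (C i) (bstar i) P ≤ Payoff (C i) (bstar i) (Pstar i) := by
    intro i P hP
    have hg := cost_grad (hC i) (hPnn i) hP
    unfold Payoff
    rcases (hPnn i).eq_or_lt with h | h
    · have hble : bstar i ≤ C' i (Pstar i) := (hb i).2
      rw [← h] at hg hble ⊢
      nlinarith [mul_le_mul_of_nonneg_left hble hP]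
    · have hb' : bstar i = C' i (Pstar i) := by rw [hbeq i h, hposlam i h]
      rw [hb']
      nlinarith [hg]
  refine ⟨⟨hbnn, fun P' hP' => ?_⟩, hbnn, Pstar, hISO, ?_⟩
  · rw [hEDuniq P' hP']
    exact ⟨hISO, hProfit⟩
  · intro i bi hbi hbne P hPISO
    obtain ⟨j, hji, hjpos⟩ : ∃ j, j ≠ i ∧ 0 < Pstar j := by
      by_cases h : i0 = i
      · exact ⟨j0, by rw [← h]; exact hij.symm, hj0⟩
      · exact ⟨i0, h, hi0⟩
    have hPinn : 0 ≤ P i := hPISO.1.2 i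
    rcases le_or_gt bi lam with hcase | hcase
    · -- underbidding (or bidding lam): pointwise payoff bound suffices
      have hg := cost_grad (hC i) (hPnn i) hPinn
      unfold Payoff
      rcases (hPnn i).eq_or_lt with h | h
      · have hble : bi ≤ C' i (Pstar i) := le_trans hcase (le_trans (hb i).1 (hb i).2)
        rw [← h] at hg hble ⊢
        nlinarith [mul_le_mul_of_nonneg_left hble hPinn]
      · have hlam' : lam = C' i (Pstar i) := (hposlam i h).symm
        have hbst : bstar i = lam := hbeq i h
        rw [hbst]
        nlinarith [hg, mul_le_mul_of_nonneg_left hcase hPinn]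
    · -- overbidding above lam: the ISO allocates nothing to i
      have hPi0 : P i = 0 := by
        by_contra hne0
        have hPipos : 0 < P i := hPinn.lt_of_ne (Ne.symm hne0)
        set b' := Function.update bstar i bi with hb'def
        set Q := Function.update (Function.update P i 0) j (P j + P i) with hQdef
        have hQi : Q i = 0 := by
          rw [hQdef, Function.update_of_ne (Ne.symm hji), Function.update_self]
        have hQj : Q j = P j + P i := by rw [hQdef, Function.update_self]
        have hQk : ∀ k, k ≠ i → k ≠ j → Q k = P k := by
          intro k hki hkj
          rw [hQdef, Function.update_of_ne hkj, Function.update_of_ne hki]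
        have hsum : ∀ c : Fin n → ℝ,
            ∑ k, c k * Q k = (∑ k, c k * P k) + (c j - c i) * P i := by
          intro c
          have key : ∑ k, (c k * Q k - c k * P k) = (c j - c i) * P i := by
            rw [← Finset.sum_subset (Finset.subset_univ ({i, j} : Finset (Fin n)))]
            · rw [Finset.sum_pair (Ne.symm hji), hQi, hQj]; ring
            · intro k _ hk
              simp only [Finset.mem_insert, Finset.mem_singleton] at hk
              push_neg at hk
              rw [hQk k hk.1 hk.2]; ring
          rw [Finset.sum_sub_distrib] at key
          linarith
        have hQfeas : Feasible Pd Q := by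
          constructor
          · have h1 := hsum 1
            simp only [Pi.one_apply, one_mul, sub_self, zero_mul, add_zero] at h1
            rw [h1, hPISO.1.1]
          · intro k
            by_cases hki : k = i
            · rw [hki, hQi]
            · by_cases hkj : k = j
              · rw [hkj, hQj]
                exact add_nonneg (hPISO.1.2 j) hPinn
              · rw [hQk k hki hkj]
                exact hPISO.1.2 k
        have hopt := hPISO.2 Q hQfeas
        rw [hsum b'] at hopt
        have hbi' : b' i = bi := Function.update_self i bi bstar
        have hbj' : b' j = lam := by
          rw [hb'def, Function.update_of_ne hji]
          exact hbeq j hjpos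
        rw [hbi', hbj'] at hopt
        nlinarith
      rw [hPi0]
      have h0 := hProfit i 0 le_rfl
      unfold Payoff at h0 ⊢
      simp only [zero_mul] at h0 ⊢
      linarith
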